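/- Let k be a positive integer, G = (V,E) a graph and S ⊆ V with |S| ≤ k. If G[V∖S] is connected, every vertex of V∖S has degree at most k in G, and some vertex x ∈ V∖S has degree at most k−1 in G, then every proper k-colouring of G[S] can be extended to a proper k-colouring of G. -/

import Mathlib

open SimpleGraph
open scoped Classical

variable {V : Type*}

/-- A proper `k`-colouring of `G`. -/
def IsProperColoring (G : SimpleGraph V) (k : ℕ) (c : V → Fin k) : Prop :=
  ∀ ⦃u v : V⦄, G.Adj u v → c u ≠ c v

/-- `c'` is obtained from `c` by a single Kempe change: the colours `a` and `b` are
swapped on the connected component (of the subgraph induced by the vertices coloured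
`a` or `b`) containing `v0`, and all other vertices keep their colour. -/

def KempeStep (G : SimpleGraph V) (k : ℕ) (c c' : V → Fin k) : Prop :=
  ∃ a b : Fin k, ∃ v0 : {x : V | c x = a ∨ c x = b},
    ∀ v : V, c' v =
      if h : c v = a ∨ c v = b then
        if (G.induce {x : V | c x = a ∨ c x = b}).Reachable v0 ⟨v, h⟩
          then Equiv.swap a b (c v) else c v
      else c v

/-- Two colourings are Kempe equivalent if one is obtained from the other by a finite
sequence of Kempe changes. -/
def KempeEquiv (G : SimpleGraph V) (k : ℕ) (c c' : V → Fin k) : Prop :=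
  Relation.ReflTransGen (KempeStep G k) c c'

/-- The set of all proper `k`-colourings of `G` forms a single Kempe class. -/
def KempeClass (G : SimpleGraph V) (k : ℕ) : Prop :=
  ∀ c c' : V → Fin k, IsProperColoring G k c → IsProperColoring G k c' →
    KempeEquiv G k c c'

/-- `G` is `d`-degenerate: every nonempty set of vertices contains a vertex with at
most `d` neighbours inside the set. -/
def Degenerate (G : SimpleGraph V) (d : ℕ) : Prop :=
  ∀ S : Set V, S.Nonempty → ∃ v ∈ S, (S ∩ G.neighborSet v).ncard ≤ d

/-- `G` is 3-connected: more than 3 vertices, and deleting any at most 2 vertices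
leaves it connected. -/
def ThreeConnected [Fintype V] (G : SimpleGraph V) : Prop :=
  3 < Fintype.card V ∧ ∀ S : Set V, S.ncard ≤ 2 → (G.induce Sᶜ).Connected


lemma exists_good_color [Fintype V] {k : ℕ} (G : SimpleGraph V)
    (S : Set V) (c0 : S → Fin k) (v : V)
    (hcard : (S ∩ G.neighborSet v).ncard < k) :
    ∃ a : Fin k, ∀ (u : V) (hu : u ∈ S), G.Adj v u → c0 ⟨u, hu⟩ ≠ a := by
  classical
  set T := S ∩ G.neighborSet v with hT
  set B : Finset (Fin k) :=
    T.toFinset.attach.image (fun u => c0 ⟨u.1, (Set.mem_toFinset.mp u.2).1⟩) with hBdef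
  have hBcard : B.card < k := by
    calc B.card ≤ T.toFinset.attach.card := Finset.card_image_le
    _ = T.toFinset.card := Finset.card_attach
    _ = T.ncard := (Set.ncard_eq_toFinset_card' T).symm
    _ < k := hcard
  have hcompl : Bᶜ.Nonempty := by
    rw [← Finset.card_pos, Finset.card_compl, Fintype.card_fin]
    omega
  obtain ⟨a, ha'⟩ := hcompl
  have ha : a ∉ B := Finset.mem_compl.mp ha'
  refine ⟨a, fun u hu hadj heq => ha ?_⟩
  have huT : u ∈ T := ⟨hu, hadj⟩
  have : c0 ⟨u, hu⟩ ∈ B := by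
    rw [hBdef]
    exact Finset.mem_image.mpr ⟨⟨u, Set.mem_toFinset.mpr huT⟩, Finset.mem_attach _ _, rfl⟩
  rwa [heq] at this

lemma reach_transfer (G : SimpleGraph V) (T : Set V) (z : V) :
    ∀ {a b : ↥T} (p : (G.induce T).Walk a b), (∀ y ∈ p.support, (y : V) ≠ z) →
    ∀ (ha : ↑a ∈ T \ {z}) (hb : ↑b ∈ T \ {z}),
    (G.induce (T \ {z})).Reachable ⟨↑a, ha⟩ ⟨↑b, hb⟩ := by
  intro a b p
  induction p with
  | nil => intro _ ha hb; exact Reachable.refl _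
  | @cons a c b h q ih =>
    intro hsup hA hB
    have hc : (c : V) ∈ T \ {z} :=
      ⟨c.2, hsup c (by simp [Walk.support_cons, Walk.start_mem_support])⟩
    have hadj : (G.induce (T \ {z})).Adj ⟨↑a, hA⟩ ⟨↑c, hc⟩ := by
      have : G.Adj ↑a ↑c := by simpa [comap_adj] using h
      simpa [comap_adj] using this
    exact hadj.reachable.trans (ih (fun y hy => hsup y (by simp [Walk.support_cons, hy])) hc hB)

lemma extend_aux {V : Type*} [Fintype V] [DecidableEq V] (k : ℕ) (hk : 0 < k)
    (G : SimpleGraph V) [DecidableRel G.Adj] :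
    ∀ n : ℕ, ∀ S : Set V, Sᶜ.ncard ≤ n →
    (G.induce Sᶜ).Connected →
    (∀ v : V, v ∉ S → G.degree v ≤ k) →
    ∀ x : V, x ∉ S → G.degree x ≤ k - 1 →
    ∀ c0 : S → Fin k, (∀ a b : S, G.Adj ↑a ↑b → c0 a ≠ c0 b) →
    ∃ c : V → Fin k, IsProperColoring G k c ∧ ∀ a : S, c ↑a = c0 a := by
  intro n
  induction n with
  | zero =>
    intro S hn _ _ x hx _ _ _
    exfalso
    have : Sᶜ.ncard = 0 := Nat.le_zero.mp hn
    have hempty : Sᶜ = ∅ := (Set.ncard_eq_zero (Set.toFinite _)).mp this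
    exact (Set.eq_empty_iff_forall_notMem.mp hempty x) hx
  | succ n ih =>
    intro S hn hconn hdeg x hx hxdeg c0 hc0
    have hxc : x ∈ Sᶜ := hx
    have hNdeg : ∀ v : V, (G.neighborSet v).ncard = G.degree v := by
      intro v
      rw [Set.ncard_eq_toFinset_card', Set.toFinset_card]
      exact G.card_neighborSet_eq_degree v
    by_cases hsub : Sᶜ ⊆ {x}
    · -- Sᶜ = {x}
      have hcard : (S ∩ G.neighborSet x).ncard < k := by
        have h1 : (S ∩ G.neighborSet x).ncard ≤ (G.neighborSet x).ncard :=
          Set.ncard_le_ncard Set.inter_subset_right (Set.toFinite _)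
        rw [hNdeg x] at h1
        omega
      obtain ⟨a, ha⟩ := exists_good_color G S c0 x hcard
      refine ⟨fun u => if h : u ∈ S then c0 ⟨u, h⟩ else a, ?_, ?_⟩
      · intro u v huv
        by_cases hu : u ∈ S <;> by_cases hv : v ∈ S
        · simpa [hu, hv] using hc0 ⟨u, hu⟩ ⟨v, hv⟩ huv
        · have : v = x := hsub hv
          subst this
          simp only [dif_pos hu, dif_neg hv]
          exact ha u hu huv.symm
        · have : u = x := hsub hu
          subst this
          simp only [dif_pos hv, dif_neg hu]
          exact fun h => (ha v hv huv) h.symm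
        · have h1 : u = x := hsub hu
          have h2 : v = x := hsub hv
          subst h1; subst h2
          exact absurd huv G.irrefl
      · intro b; simp [b.2]
    · -- there is v ∈ Sᶜ with v ≠ x
      obtain ⟨u0, hu0c, hu0x⟩ : ∃ u0, u0 ∈ Sᶜ ∧ u0 ≠ x := by
        rcases Set.not_subset.mp hsub with ⟨u0, h1, h2⟩
        exact ⟨u0, h1, by simpa using h2⟩
      set G' := G.induce Sᶜ with hG'
      have x' : ↥Sᶜ := ⟨x, hxc⟩
      obtain ⟨v', _, hmax⟩ := Finset.exists_max_image (Finset.univ : Finset ↥Sᶜ)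
        (fun u => G'.dist ⟨x, hxc⟩ u) ⟨⟨x, hxc⟩, Finset.mem_univ _⟩
      have hu0pos : 0 < G'.dist ⟨x, hxc⟩ ⟨u0, hu0c⟩ :=
        hconn.pos_dist_of_ne (fun h => hu0x (congrArg Subtype.val h).symm)
      have hvpos : 0 < G'.dist ⟨x, hxc⟩ v' :=
        lt_of_lt_of_le hu0pos (hmax _ (Finset.mem_univ _))
      have hvx : v' ≠ (⟨x, hxc⟩ : ↥Sᶜ) := by
        intro h; rw [h] at hvpos; simp [SimpleGraph.dist_self] at hvpos
      set v : V := ↑v' with hv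
      have hvS : v ∉ S := v'.2
      have hvxV : v ≠ x := fun h => hvx (Subtype.ext h)
      -- a neighbour of v' in G'
      obtain ⟨p, hp⟩ := hconn.exists_walk_length_eq_dist v' ⟨x, hxc⟩
      have hplen : p.length ≠ 0 := by
        rw [hp, SimpleGraph.dist_comm]; omega
      obtain ⟨w', hadj', q⟩ : ∃ (w' : ↥Sᶜ) (_ : G'.Adj v' w'), Nonempty (G'.Walk w' ⟨x, hxc⟩) := by
        cases p with
        | nil => simp at hplen
        | cons h q => exact ⟨_, h, ⟨q⟩⟩
      have hadjG : G.Adj v ↑w' := by exact hadj'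
      have hwv : (↑w' : V) ≠ v := fun h => hadj'.ne' (Subtype.ext h)
      -- strictly fewer than k coloured neighbours
      have hcard : (S ∩ G.neighborSet v).ncard < k := by
        have hss : S ∩ G.neighborSet v ⊂ G.neighborSet v := by
          constructor
          · exact Set.inter_subset_right
          · intro hle
            have : (↑w' : V) ∈ S ∩ G.neighborSet v := hle hadjG
            exact w'.2 this.1
        have := Set.ncard_lt_ncard hss (Set.toFinite _)
        rw [hNdeg v] at this
        exact lt_of_lt_of_le this (hdeg v hvS)
      obtain ⟨a, ha⟩ := exists_good_color G S c0 v hcard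
      -- new set and colouring
      set S' : Set V := insert v S with hS'
      have hS'c : S'ᶜ = Sᶜ \ {v} := by
        ext y; simp [hS', and_comm]
      have hxS' : x ∉ S' := by
        simp [hS', hvxV.symm, hx]
      set c0' : S' → Fin k := fun u => if h : (u : V) ∈ S then c0 ⟨u, h⟩ else a with hc0'
      -- connectivity of the smaller graph
      have hconn' : (G.induce S'ᶜ).Connected := by
        rw [hS'c]
        have key : ∀ (u' : ↥Sᶜ) (hu : (↑u' : V) ∈ Sᶜ \ {v}),
            (G.induce (Sᶜ \ {v})).Reachable ⟨x, ⟨hxc, hvxV.symm⟩⟩ ⟨↑u', hu⟩ := by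
          intro u' hu
          obtain ⟨pw, hpw⟩ := hconn.exists_walk_length_eq_dist ⟨x, hxc⟩ u'
          have hnov : ∀ y ∈ pw.support, (y : V) ≠ v := by
            intro y hy hyv
            have hyv' : y = v' := Subtype.ext hyv
            subst hyv'
            have h1 := SimpleGraph.dist_le (pw.takeUntil y hy)
            have h2 := SimpleGraph.dist_le (pw.dropUntil y hy)
            have h3 : (pw.takeUntil y hy).length + (pw.dropUntil y hy).length = pw.length := by
              rw [← Walk.length_append, Walk.take_spec]
            have h4 : G'.dist ⟨x, hxc⟩ u' ≤ G'.dist ⟨x, hxc⟩ y := hmax _ (Finset.mem_univ _)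
            have h5 : G'.dist y u' = 0 := by omega
            have h6 : y = u' := hconn.dist_eq_zero_iff.mp h5
            exact hu.2 (by rw [← h6]; exact hyv)
          exact reach_transfer G Sᶜ v pw hnov ⟨hxc, hvxV.symm⟩ hu
        rw [connected_iff]
        constructor
        · intro a' b'
          have ha' := key ⟨a'.1, a'.2.1⟩ a'.2
          have hb' := key ⟨b'.1, b'.2.1⟩ b'.2
          exact ha'.symm.trans hb'
        · exact ⟨⟨x, ⟨hxc, hvxV.symm⟩⟩⟩
      have hn' : S'ᶜ.ncard ≤ n := by
        rw [hS'c, Set.ncard_diff_singleton_of_mem (show v ∈ Sᶜ from v'.2)]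
        omega
      have hdeg' : ∀ u : V, u ∉ S' → G.degree u ≤ k := fun u hu =>
        hdeg u (fun h => hu (Set.mem_insert_iff.mpr (Or.inr h)))
      have hc0'p : ∀ a' b' : S', G.Adj ↑a' ↑b' → c0' a' ≠ c0' b' := by
        intro a' b' hab
        by_cases hA : (a' : V) ∈ S <;> by_cases hB : (b' : V) ∈ S
        · simpa [hc0', dif_pos hA, dif_pos hB] using hc0 ⟨a', hA⟩ ⟨b', hB⟩ hab
        · have hbv : (b' : V) = v := by
            rcases Set.mem_insert_iff.mp b'.2 with h | h
            · exact h
            · exact absurd h hB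
          simp only [hc0', dif_pos hA, dif_neg hB]
          intro h
          exact ha a' hA (hbv ▸ hab.symm) h
        · have hav : (a' : V) = v := by
            rcases Set.mem_insert_iff.mp a'.2 with h | h
            · exact h
            · exact absurd h hA
          simp only [hc0', dif_neg hA, dif_pos hB]
          intro h
          exact ha b' hB (hav ▸ hab) h.symm
        · have hav : (a' : V) = v := by
            rcases Set.mem_insert_iff.mp a'.2 with h | h
            · exact h
            · exact absurd h hA
          have hbv : (b' : V) = v := by
            rcases Set.mem_insert_iff.mp b'.2 with h | h
            · exact h
            · exact absurd h hB
          exact absurd (hav ▸ hbv ▸ hab) G.irrefl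
      obtain ⟨c, hcp, hcagree⟩ := ih S' hn' hconn' hdeg' x hxS' hxdeg c0' hc0'p
      refine ⟨c, hcp, fun b => ?_⟩
      have hb' : (↑b : V) ∈ S' := Set.mem_insert_iff.mpr (Or.inr b.2)
      have := hcagree ⟨↑b, hb'⟩
      rw [this]
      simp [hc0', dif_pos b.2]

/-- extension lemma for a set `S` of at most `k` vertices. -/
theorem stmt3 {V : Type*} [Fintype V] [DecidableEq V] (k : ℕ) (hk : 0 < k)
    (G : SimpleGraph V) [DecidableRel G.Adj] (S : Set V) (hS : S.ncard ≤ k)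
    (hconn : (G.induce Sᶜ).Connected)
    (hdeg : ∀ v : V, v ∉ S → G.degree v ≤ k)
    (x : V) (hx : x ∉ S) (hxdeg : G.degree x ≤ k - 1)
    (c0 : S → Fin k) (hc0 : ∀ a b : S, G.Adj ↑a ↑b → c0 a ≠ c0 b) :
    ∃ c : V → Fin k, IsProperColoring G k c ∧ ∀ a : S, c ↑a = c0 a := by
  exact extend_aux k hk G Sᶜ.ncard S le_rfl hconn hdeg x hx hxdeg c0 hc0
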